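/- (Lemma 1) Let y₁, …, y_N ∈ ℝ^d and for σ > 0 define the noised empirical density p_σ(x) = (1/N) Σ_{i=1}^N N(x; y_i, σ²I_d). Then for every x ∈ ℝ^d and σ > 0, log p_{√2·σ}(x) ≥ ∫_{ℝ^d} log p_σ(x + σn) · N(n; 0, I_d) dn; that is, the log-density at the inflated noise level √2·σ is bounded below by the expectation over n ~ N(0, I_d) of the log-density at noise level σ evaluated at x + σn. -/

import Mathlib

open MeasureTheory

/-- The isotropic Gaussian density `N(x; μ, σ²I_d)` on `ℝ^d`. -/
noncomputable def gaussPdf (d : ℕ) (σ : ℝ) (μ x : EuclideanSpace ℝ (Fin d)) : ℝ :=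
  (2 * Real.pi * σ ^ 2) ^ (-(d : ℝ) / 2) * Real.exp (-‖x - μ‖ ^ 2 / (2 * σ ^ 2))

/-- The noised empirical density `p_σ(x) = (1/N) Σᵢ N(x; yᵢ, σ²I_d)`. -/
noncomputable def noisedDensity (d N : ℕ) (y : Fin N → EuclideanSpace ℝ (Fin d)) (σ : ℝ)
    (x : EuclideanSpace ℝ (Fin d)) : ℝ :=
  (1 / N) * ∑ i, gaussPdf d σ (y i) x

section Aux

open Real

variable {E : Type*} [NormedAddCommGroup E] [InnerProductSpace ℝ E] [FiniteDimensional ℝ E]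
  [MeasurableSpace E] [BorelSpace E]

theorem aux_integrable_rexp_neg_mul_sq_norm {b : ℝ} (hb : 0 < b) :
    Integrable (fun v : E => Real.exp (-b * ‖v‖ ^ 2)) := by
  have h := (GaussianFourier.integrable_cexp_neg_mul_sq_norm_add (b := (b : ℂ))
      (by simpa) 0 (0 : E)).norm
  simp only [Complex.norm_exp] at h
  convert h using 2 with v
  norm_num
  exact Or.inl (by norm_cast)

variable {d : ℕ}

theorem gaussPdf_pos {σ : ℝ} (hσ : σ ≠ 0) (μ x : EuclideanSpace ℝ (Fin d)) :
    0 < gaussPdf d σ μ x := by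
  unfold gaussPdf
  have h : (0:ℝ) < 2 * Real.pi * σ ^ 2 := by positivity
  exact mul_pos (Real.rpow_pos_of_pos h _) (Real.exp_pos _)

theorem gaussPdf_le {σ : ℝ} (hσ : σ ≠ 0) (μ x : EuclideanSpace ℝ (Fin d)) :
    gaussPdf d σ μ x ≤ (2 * Real.pi * σ ^ 2) ^ (-(d : ℝ) / 2) := by
  unfold gaussPdf
  have h : (0:ℝ) < 2 * Real.pi * σ ^ 2 := by positivity
  nth_rewrite 2 [← mul_one ((2 * Real.pi * σ ^ 2) ^ (-(d : ℝ) / 2))]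
  apply mul_le_mul_of_nonneg_left _ (le_of_lt (Real.rpow_pos_of_pos h _))
  rw [Real.exp_le_one_iff]
  apply div_nonpos_of_nonpos_of_nonneg (neg_nonpos.mpr (by positivity)) (by positivity)

theorem noisedDensity_pos {N : ℕ} (hN : 0 < N) (y : Fin N → EuclideanSpace ℝ (Fin d))
    {σ : ℝ} (hσ : σ ≠ 0) (x : EuclideanSpace ℝ (Fin d)) :
    0 < noisedDensity d N y σ x := by
  unfold noisedDensity
  have : (0:ℝ) < N := by exact_mod_cast hN
  apply mul_pos (by positivity)
  haveI : Nonempty (Fin N) := ⟨⟨0, hN⟩⟩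
  exact Finset.sum_pos (fun i _ => gaussPdf_pos hσ _ _) Finset.univ_nonempty

theorem gaussPdf_one_eq (n : EuclideanSpace ℝ (Fin d)) :
    gaussPdf d 1 0 n = (2 * Real.pi) ^ (-(d : ℝ) / 2) * Real.exp (-(1/2) * ‖n‖ ^ 2) := by
  unfold gaussPdf
  rw [one_pow, mul_one, sub_zero]
  ring_nf

theorem gaussPdf_one_nonneg (n : EuclideanSpace ℝ (Fin d)) : 0 ≤ gaussPdf d 1 0 n :=
  le_of_lt (gaussPdf_pos one_ne_zero _ _)

/-- The key pointwise factorization of the product of Gaussians. -/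
theorem gauss_prod_eq {σ : ℝ} (hσ : 0 < σ) (y x n : EuclideanSpace ℝ (Fin d)) :
    gaussPdf d σ y (x + σ • n) * gaussPdf d 1 0 n
      = ((2 * Real.pi * σ ^ 2) ^ (-(d : ℝ) / 2) * (2 * Real.pi) ^ (-(d : ℝ) / 2)
          * Real.exp (-‖x - y‖ ^ 2 / (4 * σ ^ 2)))
        * Real.exp (-1 * ‖n + (1 / (2 * σ)) • (x - y)‖ ^ 2) := by
  have hσ2 : σ ^ 2 ≠ 0 := pow_ne_zero _ hσ.ne'
  unfold gaussPdf
  rw [one_pow, mul_one, sub_zero]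
  have h1 : x + σ • n - y = (x - y) + σ • n := by abel
  have h2 : ‖(x - y) + σ • n‖ ^ 2
      = ‖x - y‖ ^ 2 + 2 * (σ * inner ℝ (x - y) n) + σ ^ 2 * ‖n‖ ^ 2 := by
    rw [@norm_add_sq_real, real_inner_smul_right, norm_smul]
    simp [mul_pow, sq_abs]
  have h3 : ‖n + (1 / (2 * σ)) • (x - y)‖ ^ 2
      = ‖n‖ ^ 2 + 2 * ((1 / (2 * σ)) * inner ℝ n (x - y)) + (1 / (2 * σ)) ^ 2 * ‖x - y‖ ^ 2 := by
    rw [@norm_add_sq_real, real_inner_smul_right, norm_smul]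
    simp [mul_pow, sq_abs]
  have hinner : (inner ℝ n (x - y) : ℝ) = inner ℝ (x - y) n := real_inner_comm _ _
  have hexp : -‖(x - y) + σ • n‖ ^ 2 / (2 * σ ^ 2) + -‖n‖ ^ 2 / (2 * 1)
      = -‖x - y‖ ^ 2 / (4 * σ ^ 2) + -1 * ‖n + (1 / (2 * σ)) • (x - y)‖ ^ 2 := by
    rw [h2, h3, hinner]
    field_simp
    ring
  rw [h1]
  calc (2 * Real.pi * σ ^ 2) ^ (-(d : ℝ) / 2) * Real.exp (-‖(x - y) + σ • n‖ ^ 2 / (2 * σ ^ 2))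
        * ((2 * Real.pi) ^ (-(d : ℝ) / 2) * Real.exp (-‖n‖ ^ 2 / (2 * 1)))
      = ((2 * Real.pi * σ ^ 2) ^ (-(d : ℝ) / 2) * (2 * Real.pi) ^ (-(d : ℝ) / 2))
        * Real.exp (-‖(x - y) + σ • n‖ ^ 2 / (2 * σ ^ 2) + -‖n‖ ^ 2 / (2 * 1)) := by
        rw [Real.exp_add]; ring
    _ = _ := by rw [hexp, Real.exp_add]; ring

end Aux

section Conv

open Real

variable {d : ℕ}

theorem integrable_gauss_term {σ : ℝ} (hσ : 0 < σ) (y x : EuclideanSpace ℝ (Fin d)) :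
    Integrable (fun n : EuclideanSpace ℝ (Fin d) =>
      gaussPdf d σ y (x + σ • n) * gaussPdf d 1 0 n) := by
  have : (fun n : EuclideanSpace ℝ (Fin d) =>
      gaussPdf d σ y (x + σ • n) * gaussPdf d 1 0 n)
      = fun n => ((2 * Real.pi * σ ^ 2) ^ (-(d : ℝ) / 2) * (2 * Real.pi) ^ (-(d : ℝ) / 2)
          * Real.exp (-‖x - y‖ ^ 2 / (4 * σ ^ 2)))
        * Real.exp (-1 * ‖n + (1 / (2 * σ)) • (x - y)‖ ^ 2) := by
    funext n; exact gauss_prod_eq hσ y x n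
  rw [this]
  exact (((aux_integrable_rexp_neg_mul_sq_norm (by norm_num : (0:ℝ) < 1)).comp_add_right
    ((1 / (2 * σ)) • (x - y)))).const_mul _

theorem rpow_helper (e : ℝ) {a b c : ℝ} (ha : 0 < a) (hb : 0 < b) (hc : 0 < c) :
    a ^ e * b ^ e * c ^ (-e) = (a * b / c) ^ e := by
  rw [Real.div_rpow (by positivity) hc.le, Real.mul_rpow ha.le hb.le, Real.rpow_neg hc.le,
    div_eq_mul_inv]

theorem conv_gauss {σ : ℝ} (hσ : 0 < σ) (y x : EuclideanSpace ℝ (Fin d)) :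
    ∫ n : EuclideanSpace ℝ (Fin d), gaussPdf d σ y (x + σ • n) * gaussPdf d 1 0 n
      = gaussPdf d (Real.sqrt 2 * σ) y x := by
  have h1 : ∫ n : EuclideanSpace ℝ (Fin d), gaussPdf d σ y (x + σ • n) * gaussPdf d 1 0 n
      = ((2 * Real.pi * σ ^ 2) ^ (-(d : ℝ) / 2) * (2 * Real.pi) ^ (-(d : ℝ) / 2)
          * Real.exp (-‖x - y‖ ^ 2 / (4 * σ ^ 2)))
        * ∫ n : EuclideanSpace ℝ (Fin d), Real.exp (-1 * ‖n + (1 / (2 * σ)) • (x - y)‖ ^ 2) := by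
    rw [← integral_const_mul]
    congr 1; funext n; exact gauss_prod_eq hσ y x n
  have h2 : ∫ n : EuclideanSpace ℝ (Fin d), Real.exp (-1 * ‖n + (1 / (2 * σ)) • (x - y)‖ ^ 2)
      = (Real.pi) ^ ((d : ℝ) / 2) := by
    rw [integral_add_right_eq_self (fun n => Real.exp (-1 * ‖n‖ ^ 2)) ((1 / (2 * σ)) • (x - y))]
    rw [GaussianFourier.integral_rexp_neg_mul_sq_norm (by norm_num : (0:ℝ) < 1)]
    simp [finrank_euclideanSpace_fin]
  rw [h1, h2]
  unfold gaussPdf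
  have hsq : (Real.sqrt 2 * σ) ^ 2 = 2 * σ ^ 2 := by
    rw [mul_pow, Real.sq_sqrt (by norm_num : (2:ℝ) ≥ 0)]
  rw [hsq]
  have hπ : (0:ℝ) < Real.pi := Real.pi_pos
  have hc : (2 * Real.pi * σ ^ 2) ^ (-(d : ℝ) / 2) * (2 * Real.pi) ^ (-(d : ℝ) / 2)
      * Real.pi ^ ((d : ℝ) / 2) = (2 * Real.pi * (2 * σ ^ 2)) ^ (-(d : ℝ) / 2) := by
    have h0 : ((d : ℝ) / 2) = -(-(d : ℝ) / 2) := by ring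
    rw [h0, rpow_helper (-(d : ℝ) / 2) (by positivity) (by positivity) hπ]
    congr 1
    field_simp
  rw [← hc]
  have he : -‖x - y‖ ^ 2 / (4 * σ ^ 2) = -‖x - y‖ ^ 2 / (2 * (2 * σ ^ 2)) := by ring_nf
  rw [he]
  ring

end Conv

section Glue

open Real

variable {d : ℕ}

theorem integrable_gaussPdf_one :
    Integrable (fun n : EuclideanSpace ℝ (Fin d) => gaussPdf d 1 0 n) := by
  simp_rw [gaussPdf_one_eq]
  exact (aux_integrable_rexp_neg_mul_sq_norm (by norm_num : (0:ℝ) < 1/2)).const_mul _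

theorem integral_gaussPdf_one :
    ∫ n : EuclideanSpace ℝ (Fin d), gaussPdf d 1 0 n = 1 := by
  simp_rw [gaussPdf_one_eq]
  rw [integral_const_mul,
    GaussianFourier.integral_rexp_neg_mul_sq_norm (by norm_num : (0:ℝ) < 1/2)]
  rw [finrank_euclideanSpace_fin]
  rw [show Real.pi / (1/2) = 2 * Real.pi by ring]
  rw [← Real.rpow_add (by positivity),
    show -(d:ℝ)/2 + (d:ℝ)/2 = 0 by ring, Real.rpow_zero]

theorem poly_exp_bound {A t : ℝ} (hA : 0 ≤ A) (ht : 0 ≤ t) :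
    (A + t) * Real.exp (-(1/2) * t) ≤ (A + 4) * Real.exp (-(1/4) * t) := by
  have h1 : Real.exp (-(1/2)*t) = Real.exp (-(1/4)*t) * Real.exp (-(1/4)*t) := by
    rw [← Real.exp_add]; ring_nf
  have h5 : 0 < Real.exp (-(1/4)*t) := Real.exp_pos _
  have h2 : t * Real.exp (-(1/4)*t) ≤ 4 := by
    have h3 : (1/4)*t + 1 ≤ Real.exp ((1/4)*t) := Real.add_one_le_exp _
    have h4 : Real.exp (-(1/4)*t) * Real.exp ((1/4)*t) = 1 := by
      rw [← Real.exp_add]; ring_nf; exact Real.exp_zero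
    nlinarith
  have h6 : Real.exp (-(1/4)*t) ≤ 1 := by
    rw [Real.exp_le_one_iff]; nlinarith
  rw [h1]
  nlinarith [mul_le_mul_of_nonneg_right h2 h5.le,
    mul_le_mul_of_nonneg_right (mul_le_of_le_one_right hA h6) h5.le]

theorem continuous_gaussPdf (σ' : ℝ) (μ : EuclideanSpace ℝ (Fin d)) :
    Continuous (fun z : EuclideanSpace ℝ (Fin d) => gaussPdf d σ' μ z) := by
  unfold gaussPdf
  fun_prop

end Glue

/-- Lemma 1: the log-density at the inflated noise level `√2·σ` is bounded below by the
expectation over `n ~ N(0, I_d)` of the log-density at level `σ` evaluated at `x + σn`. -/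
theorem log_noisedDensity_sqrt_two_ge (d N : ℕ) (hN : 0 < N)
    (y : Fin N → EuclideanSpace ℝ (Fin d)) (σ : ℝ) (hσ : 0 < σ)
    (x : EuclideanSpace ℝ (Fin d)) :
    Real.log (noisedDensity d N y (Real.sqrt 2 * σ) x)
      ≥ ∫ n : EuclideanSpace ℝ (Fin d),
          Real.log (noisedDensity d N y σ (x + σ • n)) * gaussPdf d 1 0 n := by
  have hπ : (0:ℝ) < Real.pi := Real.pi_pos
  set φ : EuclideanSpace ℝ (Fin d) → ℝ := fun n => gaussPdf d 1 0 n with hφdef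
  set f : EuclideanSpace ℝ (Fin d) → ℝ :=
    fun n => noisedDensity d N y σ (x + σ • n) with hfdef
  set c : ℝ := noisedDensity d N y (Real.sqrt 2 * σ) x with hcdef
  have hσ2 : Real.sqrt 2 * σ ≠ 0 :=
    mul_ne_zero (ne_of_gt (Real.sqrt_pos.mpr (by norm_num))) hσ.ne'
  have hc : 0 < c := noisedDensity_pos hN y hσ2 x
  have hf : ∀ n, 0 < f n := fun n => noisedDensity_pos hN y hσ.ne' _
  have hφ0 : ∀ n, 0 ≤ φ n := fun n => gaussPdf_one_nonneg n
  have hφ_int : Integrable φ := integrable_gaussPdf_one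
  have hφ_one : ∫ n, φ n = 1 := integral_gaussPdf_one
  -- the product f·φ as an explicit sum
  have hprod : (fun n => f n * φ n)
      = fun n => (1/(N:ℝ)) * ∑ i, (gaussPdf d σ (y i) (x + σ • n) * φ n) := by
    funext n
    simp only [hfdef, noisedDensity]
    rw [mul_assoc, Finset.sum_mul]
  have hfφ : Integrable (fun n => f n * φ n) := by
    rw [hprod]
    exact (integrable_finset_sum _ (fun i _ => integrable_gauss_term hσ (y i) x)).const_mul _
  have hconv : ∫ n, f n * φ n = c := by
    rw [hprod, integral_const_mul,
      integral_finset_sum _ (fun i _ => integrable_gauss_term hσ (y i) x)]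
    simp only [hcdef, noisedDensity]
    congr 1
    exact Finset.sum_congr rfl (fun i _ => conv_gauss hσ (y i) x)
  -- continuity / measurability
  have hmove : Continuous (fun n : EuclideanSpace ℝ (Fin d) => x + σ • n) :=
    continuous_const.add (continuous_id.const_smul σ)
  have hfc : Continuous f := by
    rw [hfdef]
    simp only [noisedDensity]
    exact continuous_const.mul
      (continuous_finset_sum _ (fun i _ => (continuous_gaussPdf σ (y i)).comp hmove))
  have hφc : Continuous φ := continuous_gaussPdf 1 0
  have hF_meas : AEStronglyMeasurable (fun n => Real.log (f n) * φ n) volume :=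
    ((hfc.log (fun n => (hf n).ne')).mul hφc).aestronglyMeasurable
  -- bound on |log (f n)|
  set C2 : ℝ := (2 * Real.pi * σ ^ 2) ^ (-(d : ℝ) / 2) with hC2def
  have hC2 : 0 < C2 := Real.rpow_pos_of_pos (by positivity) _
  have hNR : (0:ℝ) < N := by exact_mod_cast hN
  set i0 : Fin N := ⟨0, hN⟩ with hi0
  set A : ℝ := |Real.log C2| + |Real.log (C2 / N)| + ‖x - y i0‖ ^ 2 / σ ^ 2 with hAdef
  have hA : 0 ≤ A := by positivity
  have hub : ∀ n, Real.log (f n) ≤ Real.log C2 := by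
    intro n
    have h1 : f n ≤ C2 := by
      simp only [hfdef, noisedDensity]
      have h2 : ∑ i, gaussPdf d σ (y i) (x + σ • n) ≤ ∑ _i : Fin N, C2 :=
        Finset.sum_le_sum (fun i _ => gaussPdf_le hσ.ne' (y i) (x + σ • n))
      rw [Finset.sum_const, Finset.card_univ, Fintype.card_fin, nsmul_eq_mul] at h2
      calc (1/(N:ℝ)) * ∑ i, gaussPdf d σ (y i) (x + σ • n)
          ≤ (1/(N:ℝ)) * ((N:ℝ) * C2) := by
            apply mul_le_mul_of_nonneg_left h2 (by positivity)
        _ = C2 := by field_simp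
    exact (Real.log_le_log_iff (hf n) hC2).mpr h1
  have hlb : ∀ n, Real.log (C2 / N) - ‖x + σ • n - y i0‖ ^ 2 / (2 * σ ^ 2)
      ≤ Real.log (f n) := by
    intro n
    have h1 : (C2 / N) * Real.exp (-‖x + σ • n - y i0‖ ^ 2 / (2 * σ ^ 2)) ≤ f n := by
      simp only [hfdef, noisedDensity]
      have h2 : gaussPdf d σ (y i0) (x + σ • n) ≤ ∑ i, gaussPdf d σ (y i) (x + σ • n) :=
        Finset.single_le_sum (fun i _ => (gaussPdf_pos hσ.ne' (y i) _).le)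
          (Finset.mem_univ i0)
      calc (C2 / N) * Real.exp (-‖x + σ • n - y i0‖ ^ 2 / (2 * σ ^ 2))
          = (1/(N:ℝ)) * gaussPdf d σ (y i0) (x + σ • n) := by
            unfold gaussPdf; rw [← hC2def]; ring
        _ ≤ (1/(N:ℝ)) * ∑ i, gaussPdf d σ (y i) (x + σ • n) := by
            apply mul_le_mul_of_nonneg_left h2 (by positivity)
    have h3 := (Real.log_le_log_iff (by positivity) (hf n)).mpr h1
    rw [Real.log_mul (by positivity) (Real.exp_pos _).ne', Real.log_exp, neg_div] at h3
    linarith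
  have hnormsq : ∀ n : EuclideanSpace ℝ (Fin d),
      ‖x + σ • n - y i0‖ ^ 2 ≤ 2 * ‖x - y i0‖ ^ 2 + 2 * σ ^ 2 * ‖n‖ ^ 2 := by
    intro n
    have h1 : ‖x + σ • n - y i0‖ ≤ ‖x - y i0‖ + σ * ‖n‖ := by
      have : x + σ • n - y i0 = (x - y i0) + σ • n := by abel
      rw [this]
      calc ‖(x - y i0) + σ • n‖ ≤ ‖x - y i0‖ + ‖σ • n‖ := norm_add_le _ _
        _ = ‖x - y i0‖ + σ * ‖n‖ := by rw [norm_smul, Real.norm_eq_abs, abs_of_pos hσ]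
    have h2 : ‖x + σ • n - y i0‖ ^ 2 ≤ (‖x - y i0‖ + σ * ‖n‖) ^ 2 :=
      pow_le_pow_left₀ (norm_nonneg _) h1 2
    nlinarith [h2, sq_nonneg (‖x - y i0‖ - σ * ‖n‖)]
  have habs : ∀ n, |Real.log (f n)| ≤ A + ‖n‖ ^ 2 := by
    intro n
    rw [abs_le]
    constructor
    · have h1 := hlb n
      have h3 : ‖x + σ • n - y i0‖ ^ 2 / (2 * σ ^ 2)
          ≤ ‖x - y i0‖ ^ 2 / σ ^ 2 + ‖n‖ ^ 2 := by
        calc ‖x + σ • n - y i0‖ ^ 2 / (2 * σ ^ 2)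
            ≤ (2 * ‖x - y i0‖ ^ 2 + 2 * σ ^ 2 * ‖n‖ ^ 2) / (2 * σ ^ 2) := by
              gcongr
              exact hnormsq n
          _ = ‖x - y i0‖ ^ 2 / σ ^ 2 + ‖n‖ ^ 2 := by field_simp
      have h4 : -|Real.log (C2 / N)| ≤ Real.log (C2 / N) := neg_abs_le _
      simp only [hAdef]
      linarith [abs_nonneg (Real.log C2)]
    · have h1 := hub n
      have h2 : Real.log C2 ≤ |Real.log C2| := le_abs_self _
      have : (0:ℝ) ≤ ‖n‖ ^ 2 := by positivity
      simp only [hAdef]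
      nlinarith [abs_nonneg (Real.log (C2 / N)), sq_nonneg ‖x - y i0‖,
        sq_nonneg σ, div_nonneg (sq_nonneg ‖x - y i0‖) (sq_nonneg σ)]
  -- integrability of log f · φ
  set K : ℝ := (2 * Real.pi) ^ (-(d : ℝ) / 2) * (A + 4) with hKdef
  have hbound : ∀ n, ‖Real.log (f n) * φ n‖ ≤ K * Real.exp (-(1/4) * ‖n‖ ^ 2) := by
    intro n
    rw [norm_mul, Real.norm_eq_abs, Real.norm_eq_abs, abs_of_nonneg (hφ0 n)]
    have h1 : |Real.log (f n)| * φ n ≤ (A + ‖n‖ ^ 2) * φ n :=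
      mul_le_mul_of_nonneg_right (habs n) (hφ0 n)
    have h2 : (A + ‖n‖ ^ 2) * φ n
        = (2 * Real.pi) ^ (-(d : ℝ) / 2) * ((A + ‖n‖ ^ 2) * Real.exp (-(1/2) * ‖n‖ ^ 2)) := by
      simp only [hφdef]
      rw [gaussPdf_one_eq]
      ring
    have h3 := poly_exp_bound hA (sq_nonneg ‖n‖)
    calc |Real.log (f n)| * φ n ≤ (A + ‖n‖ ^ 2) * φ n := h1
      _ = (2 * Real.pi) ^ (-(d : ℝ) / 2) * ((A + ‖n‖ ^ 2) * Real.exp (-(1/2) * ‖n‖ ^ 2)) := h2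
      _ ≤ (2 * Real.pi) ^ (-(d : ℝ) / 2) * ((A + 4) * Real.exp (-(1/4) * ‖n‖ ^ 2)) := by
          apply mul_le_mul_of_nonneg_left h3 (by positivity)
      _ = K * Real.exp (-(1/4) * ‖n‖ ^ 2) := by rw [hKdef]; ring
  have hF_int : Integrable (fun n => Real.log (f n) * φ n) := by
    apply Integrable.mono'
      ((aux_integrable_rexp_neg_mul_sq_norm (by norm_num : (0:ℝ) < 1/4)).const_mul K)
      hF_meas
    exact ae_of_all _ hbound
  -- pointwise Jensen via log t ≤ t - 1
  have key : ∀ n, Real.log (f n) * φ n ≤ (Real.log c - 1) * φ n + (f n * φ n) / c := by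
    intro n
    have hlog : Real.log (f n) ≤ Real.log c - 1 + f n / c := by
      have h := Real.log_le_sub_one_of_pos (div_pos (hf n) hc)
      rw [Real.log_div (hf n).ne' hc.ne'] at h
      linarith
    calc Real.log (f n) * φ n ≤ (Real.log c - 1 + f n / c) * φ n :=
        mul_le_mul_of_nonneg_right hlog (hφ0 n)
      _ = (Real.log c - 1) * φ n + (f n * φ n) / c := by ring
  have hRHS_int : Integrable (fun n => (Real.log c - 1) * φ n + (f n * φ n) / c) :=
    (hφ_int.const_mul _).add (hfφ.div_const c)
  have hint := integral_mono hF_int hRHS_int key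
  rw [integral_add (hφ_int.const_mul _) (hfφ.div_const c), integral_const_mul, integral_div,
    hφ_one, hconv, mul_one, div_self hc.ne'] at hint
  have : Real.log c - 1 + 1 = Real.log c := by ring
  rw [this] at hint
  exact hint
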